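/- For 1 ≤ i < j ≤ m, the action of the permutation s_i s_{i+1} ⋯ s_{j-1} (defined via the birational R-matrix action of the symmetric group) on the r-th coordinate of x_i satisfies s_i ⋯ s_{j-1}(x_i^{(r)}) = x_j^{(r+j-i)} σ̄_{(n-1)(j-i)}^{(r)}(x_i, ..., x_j) / σ̄_{(n-1)(j-i)}^{(r-1)}(x_i, ..., x_j), with upper indices mod n. -/

import Mathlib

open Finset

noncomputable section BirationalR

/-- A vector of reals with cyclically indexed coordinates (upper index mod `n`). -/
abbrev Vec (n : ℕ) := ZMod n → ℝ

/-- `κ_r(a,b) = Σ_{j=r}^{r+n-1} (Π_{k=r+1}^{j} b_k)(Π_{k=j+1}^{r+n-1} a_k)`, indices mod `n`. -/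
def kappaF (n : ℕ) (r : ZMod n) (a b : Vec n) : ℝ :=
  ∑ d ∈ Finset.range n,
    (∏ t ∈ Finset.range d, b (r + 1 + (t : ℕ))) *
      ∏ t ∈ Finset.range (n - 1 - d), a (r + 1 + (d : ℕ) + (t : ℕ))

/-- First component `b'` of the birational R-matrix `η(a,b) = (b',a')`:
`b'_i = b_{i+1} κ_{i+1}(a,b)/κ_i(a,b)`. -/
def etaB (n : ℕ) (a b : Vec n) : Vec n :=
  fun i => b (i + 1) * kappaF n (i + 1) a b / kappaF n i a b

/-- Second component `a'` of `η(a,b) = (b',a')`: `a'_i = a_{i-1} κ_{i-1}(a,b)/κ_i(a,b)`. -/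
def etaA (n : ℕ) (a b : Vec n) : Vec n :=
  fun i => a (i - 1) * kappaF n (i - 1) a b / kappaF n i a b

/-- `η` applied to positions `(p, p+1)` of a tuple of vectors. -/
def etaAt (n : ℕ) (p : ℕ) (X : ℕ → Vec n) : ℕ → Vec n :=
  fun q => if q = p then etaB n (X p) (X (p + 1))
    else if q = p + 1 then etaA n (X p) (X (p + 1)) else X q

/-- Action of the word `s_{w₁} s_{w₂} ⋯ s_{wₗ}` (rightmost acts first). -/
def applyWord (n : ℕ) (w : List ℕ) (X : ℕ → Vec n) : ℕ → Vec n :=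
  w.foldr (etaAt n) X

/-- The tuple `(x_i, x_{i+1}, …, x_j)` as a list. -/
def seg {n : ℕ} (x : ℕ → Vec n) (i j : ℕ) : List (Vec n) :=
  (List.range (j + 1 - i)).map fun t => x (i + t)

/-- `τ_k^{(r)}(x_1,…,x_m)`: sum over weakly increasing `i_1 ≤ … ≤ i_k`, no index used
more than `n-1` times, of `x_{i_1}^{(r)} x_{i_2}^{(r-1)} ⋯ x_{i_k}^{(r-k+1)}`.
Encoded via multiplicity functions; `τ = 0` for negative `k`. -/
def tauF (n : ℕ) (r : ZMod n) (k : ℤ) (x : List (Vec n)) : ℝ :=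
  if 0 ≤ k then
    ∑ c ∈ (Fintype.piFinset fun _ : Fin x.length => Finset.range n).filter
        (fun c => ∑ i, c i = k.toNat),
      ∏ i : Fin x.length, ∏ β ∈ Finset.range (c i),
        x.get i (r - (∑ i' ∈ Finset.univ.filter (fun i' => i' < i), c i' : ℕ) - (β : ℕ))
  else 0

/-- `σ_k^{(r)}(x_1,…,x_m) = Σ_{t=0}^{k} x_1^{(r)} ⋯ x_1^{(r-t+1)} τ_{k-t}^{(r-t)}(x_2,…,x_m)`. -/
def sigmaF (n : ℕ) (r : ZMod n) (k : ℕ) : List (Vec n) → ℝ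
  | [] => if k = 0 then 1 else 0
  | y :: rest =>
      ∑ t ∈ Finset.range (k + 1),
        (∏ β ∈ Finset.range t, y (r - (β : ℕ))) * tauF n (r - (t : ℕ)) ((k : ℤ) - (t : ℤ)) rest

/-- `σ̄_k^{(r)}(x_1,…,x_m) = Σ_{t=0}^{k} τ_{k-t}^{(r)}(x_1,…,x_{m-1}) x_m^{(r-k+t)} ⋯ x_m^{(r-k+1)}`. -/
def sigmaBarF (n : ℕ) (r : ZMod n) (k : ℕ) : List (Vec n) → ℝ
  | [] => if k = 0 then 1 else 0
  | y :: rest =>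
      ∑ t ∈ Finset.range (k + 1),
        tauF n r ((k : ℤ) - (t : ℤ)) ((y :: rest).dropLast) *
          ∏ β ∈ Finset.range t,
            (y :: rest).getLast (List.cons_ne_nil y rest) (r - (k : ℕ) + 1 + (β : ℕ))

/-- `Ω_k^{(r)}(x_i,…,x_j) = Σ_{ℓ=0}^{n-1} σ^{(r)}_{(n-1)(k-i)+ℓ}(x_i,…,x_k)
σ̄^{(r+k-i-ℓ)}_{(n-1)(j-k)-ℓ}(x_{k+1},…,x_j)`. -/
def OmegaF (n : ℕ) (r : ZMod n) (k i j : ℕ) (x : ℕ → Vec n) : ℝ :=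
  ∑ ℓ ∈ Finset.range n,
    sigmaF n r ((n - 1) * (k - i) + ℓ) (seg x i k) *
      sigmaBarF n (r + (k : ℕ) - (i : ℕ) - (ℓ : ℕ)) ((n - 1) * (j - k) - ℓ) (seg x (k + 1) j)

/-- `P_k^{(r)}(x_i,…,x_j) = Σ_{t=0}^{k} (Π_{s=0}^{t-1} x_i^{(r-s)})
σ_{(n-1)(j-i-1)}^{(r-t)}(x_i,…,x_{j-1}) (Π_{s=0}^{k-t-1} x_j^{(r-t+j-i-1-s)})`. -/
def PF (n : ℕ) (r : ZMod n) (k i j : ℕ) (x : ℕ → Vec n) : ℝ :=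
  ∑ t ∈ Finset.range (k + 1),
    (∏ s ∈ Finset.range t, x i (r - (s : ℕ))) *
      sigmaF n (r - (t : ℕ)) ((n - 1) * (j - i - 1)) (seg x i (j - 1)) *
      ∏ s ∈ Finset.range (k - t), x j (r - (t : ℕ) + (j : ℕ) - (i : ℕ) - 1 - (s : ℕ))

end BirationalR

section Lemmas

variable {n : ℕ}

lemma tauF_neg (r : ZMod n) {k : ℤ} (hk : k < 0) (x : List (Vec n)) :
    tauF n r k x = 0 := by
  simp only [tauF, if_neg (not_le.2 hk)]

lemma tauF_nil (r : ZMod n) (k : ℤ) : tauF n r k [] = if k = 0 then 1 else 0 := by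
  rcases lt_or_ge k 0 with h | h
  · rw [tauF_neg r h, if_neg (by omega)]
  · simp only [tauF, if_pos h]
    rcases eq_or_ne k 0 with rfl | hk
    · simp
    · rw [if_neg hk]
      have he : (Fintype.piFinset fun _ : Fin ([] : List (Vec n)).length => Finset.range n).filter
          (fun c => ∑ i, c i = k.toNat) = ∅ := by
        refine Finset.filter_eq_empty_iff.2 fun c _ => ?_
        have : (∑ i, c i) = 0 := by simp
        omega
      rw [he, Finset.sum_empty]

lemma tauF_nonneg (r : ZMod n) (k : ℤ) {x : List (Vec n)}
    (hx : ∀ v ∈ x, ∀ s, 0 < v s) : 0 ≤ tauF n r k x := by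
  rw [tauF]
  split
  · refine Finset.sum_nonneg fun c _ => Finset.prod_nonneg fun i _ =>
      Finset.prod_nonneg fun β _ => le_of_lt ?_
    exact hx _ (by simpa using List.get_mem x i.1 i.2) _
  · exact le_refl 0

lemma tauF_of_big (r : ZMod n) {k : ℤ} {x : List (Vec n)}
    (hk : ((n:ℤ) - 1) * x.length < k) (hn : 1 ≤ n) : tauF n r k x = 0 := by
  rcases lt_or_ge k 0 with h | h
  · exact tauF_neg r h x
  · rw [tauF, if_pos h]
    have he : (Fintype.piFinset fun _ : Fin x.length => Finset.range n).filter
        (fun c => ∑ i, c i = k.toNat) = ∅ := by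
      refine Finset.filter_eq_empty_iff.2 fun c hc => ?_
      have h1 : ∀ i, c i ≤ n - 1 := by
        intro i
        have := (Fintype.mem_piFinset.1 hc) i
        simp only [Finset.mem_range] at this
        omega
      have h2 : (∑ i, c i) ≤ x.length * (n - 1) := by
        calc (∑ i, c i) ≤ ∑ _i : Fin x.length, (n - 1) := Finset.sum_le_sum fun i _ => h1 i
          _ = x.length * (n - 1) := by simp [Finset.sum_const, Finset.card_univ, Nat.mul_comm]
      have h3 : (x.length : ℤ) * ((n:ℤ) - 1) < k := by linarith [hk]
      have h4 : (x.length * (n-1) : ℕ) < k.toNat := by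
        have : ((x.length * (n-1) : ℕ) : ℤ) = (x.length : ℤ) * ((n:ℤ)-1) := by
          push_cast [Nat.cast_sub hn]; ring
        omega
      omega
    rw [he, Finset.sum_empty]

end Lemmas

section Lemmas2

variable {n : ℕ}

lemma sum_filter_lt_cons {m : ℕ} (a : ℕ) (c' : Fin m → ℕ) (i : Fin m) :
    ∑ i' ∈ Finset.univ.filter (fun i' => i' < i.succ), (Fin.cons a c' : Fin (m+1) → ℕ) i' =
      a + ∑ i' ∈ Finset.univ.filter (fun i' => i' < i), c' i' := by
  rw [Finset.sum_filter, Finset.sum_filter, Fin.sum_univ_succ]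
  simp [Fin.succ_lt_succ_iff, Fin.succ_pos]

lemma tauF_cons (r : ZMod n) (k : ℤ) (y : Vec n) (x : List (Vec n)) :
    tauF n r k (y :: x) =
      ∑ a ∈ Finset.range n, (∏ β ∈ Finset.range a, y (r - (β : ℕ))) *
        tauF n (r - (a : ℕ)) (k - (a : ℤ)) x := by
  rcases lt_or_ge k 0 with h | h
  · rw [tauF_neg r h]
    exact (Finset.sum_eq_zero fun a _ => by rw [tauF_neg _ (by omega), mul_zero]).symm
  · conv_lhs => rw [tauF, if_pos h]
    simp only [List.length_cons]
    refine Eq.trans (Finset.sum_nbij'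
      (i := fun c : Fin (x.length+1) → ℕ => ((c 0 : ℕ), Fin.tail c))
      (j := fun p : ℕ × (Fin x.length → ℕ) => (Fin.cons p.1 p.2 : Fin (x.length+1) → ℕ))
      (t := ((Finset.range n) ×ˢ (Fintype.piFinset fun _ : Fin x.length => Finset.range n)).filter
         (fun p => p.1 + ∑ i, p.2 i = k.toNat))
      (g := fun p => ∏ i : Fin (x.length+1), ∏ β ∈ Finset.range ((Fin.cons p.1 p.2 : Fin (x.length+1) → ℕ) i),
        (y :: x).get i (r - (∑ i' ∈ Finset.univ.filter (fun i' => i' < i),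
          (Fin.cons p.1 p.2 : Fin (x.length+1) → ℕ) i' : ℕ) - (β : ℕ)))
      ?_ ?_ ?_ ?_ ?_) ?_
    · intro c hc
      simp only [Finset.mem_filter, Fintype.mem_piFinset] at hc ⊢
      refine ⟨Finset.mem_product.2 ⟨by simpa using hc.1 0, Fintype.mem_piFinset.2 fun i => hc.1 i.succ⟩, ?_⟩
      rw [← hc.2, Fin.sum_univ_succ]
      rfl
    · intro p hp
      simp only [Finset.mem_filter, Finset.mem_product, Fintype.mem_piFinset] at hp ⊢
      constructor
      · intro i
        refine Fin.cases ?_ ?_ i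
        · simpa using hp.1.1
        · intro i'; simpa using hp.1.2 i'
      · rw [Fin.sum_univ_succ, Fin.cons_zero]
        simpa using hp.2
    · intro c _; exact Fin.cons_self_tail c
    · intro p _; simp
    · intro c _
      exact (congrArg (fun z : Fin (x.length+1) → ℕ =>
        ∏ i : Fin (x.length+1), ∏ β ∈ Finset.range (z i),
          (y :: x).get i (r - (∑ i' ∈ Finset.univ.filter (fun i' => i' < i), z i' : ℕ) - (β : ℕ)))
        (Fin.cons_self_tail c)).symm
    · -- main: sum over filtered product equals RHS
      rw [Finset.sum_filter, Finset.sum_product]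
      refine Finset.sum_congr rfl fun a ha => ?_
      simp only [Finset.mem_range] at ha
      have hg : ∀ c' : Fin x.length → ℕ,
          (∏ i : Fin (x.length+1), ∏ β ∈ Finset.range ((Fin.cons a c' : Fin (x.length+1) → ℕ) i),
            (y :: x).get i (r - (∑ i' ∈ Finset.univ.filter (fun i' => i' < i),
              (Fin.cons a c' : Fin (x.length+1) → ℕ) i' : ℕ) - (β : ℕ)))
          = (∏ β ∈ Finset.range a, y (r - (β : ℕ))) *
            ∏ i : Fin x.length, ∏ β ∈ Finset.range (c' i),
              x.get i ((r - (a : ℕ)) - (∑ i' ∈ Finset.univ.filter (fun i' => i' < i), c' i' : ℕ) - (β : ℕ)) := by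
        intro c'
        rw [Fin.prod_univ_succ]
        congr 1
        · have h0 : (Finset.univ.filter (fun i' => i' < (0 : Fin (x.length+1)))) = ∅ := by
            refine Finset.filter_eq_empty_iff.2 fun i' _ => ?_
            exact Fin.not_lt_zero _  -- may need adjusting
          rw [Fin.cons_zero, h0]
          simp
          rfl
        · refine Finset.prod_congr rfl fun i _ => ?_
          rw [Fin.cons_succ, sum_filter_lt_cons]
          refine Finset.prod_congr rfl fun β _ => ?_
          have hget : (y::x).get i.succ = x.get i := rfl
          rw [hget]
          refine congrArg _ ?_
          push_cast
          ring
      simp only [hg]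
      rcases le_or_gt (a : ℤ) k with hak | hak
      · rw [tauF, if_pos (by omega)]
        conv_rhs => rw [Finset.sum_filter, Finset.mul_sum]
        refine Finset.sum_congr rfl fun c' _ => ?_
        rw [mul_ite, mul_zero]
        exact if_congr (by constructor <;> intro hh <;> omega) rfl rfl
      · rw [tauF_neg _ (by omega), mul_zero]
        refine Finset.sum_eq_zero fun c' _ => ?_
        rw [if_neg (by omega)]

end Lemmas2

section Lemmas3

variable {n : ℕ}

lemma sum_shift {M : Type*} [AddCommMonoid M] (f : ℕ → M) (e N a : ℕ)
    (h1 : ∀ u < e, f u = 0) (h2 : ∀ u, N ≤ u → f (e + u) = 0) :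
    ∑ u ∈ Finset.range (e + (N + a)), f u = ∑ t ∈ Finset.range N, f (e + t) := by
  rw [Finset.sum_range_add, Finset.sum_eq_zero (fun u hu => h1 u (Finset.mem_range.1 hu)),
    zero_add, Finset.sum_range_add,
    Finset.sum_eq_zero (fun s _ => h2 (N + s) (Nat.le_add_right _ _)), add_zero]

lemma tauF_pos (hn : 1 ≤ n) (x : List (Vec n)) (hx : ∀ v ∈ x, ∀ s, 0 < v s) :
    ∀ (r : ZMod n) (k : ℤ), 0 ≤ k → k ≤ ((n:ℤ)-1) * x.length → 0 < tauF n r k x := by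
  induction x with
  | nil =>
    intro r k h0 h1
    have hk : k = 0 := by simp at h1; omega
    subst hk
    rw [tauF_nil]
    simp
  | cons y x ih =>
    intro r k h0 h1
    have hx' : ∀ v ∈ x, ∀ s, 0 < v s := fun v hv => hx v (List.mem_cons_of_mem _ hv)
    rw [tauF_cons]
    have hy : ∀ s, 0 < y s := hx y (List.mem_cons_self)
    have hm1 : min (n-1) k.toNat ≤ n - 1 := min_le_left _ _
    have hm2 : min (n-1) k.toNat ≤ k.toNat := min_le_right _ _
    refine Finset.sum_pos' (fun a _ => mul_nonneg
      (Finset.prod_nonneg fun β _ => le_of_lt (hy _)) (tauF_nonneg _ _ hx')) ?_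
    refine ⟨min (n-1) k.toNat, Finset.mem_range.2 (by omega), ?_⟩
    refine mul_pos (Finset.prod_pos fun β _ => hy _) (ih hx' _ _ (by omega) ?_)
    have hl : ((y :: x).length : ℤ) = (x.length : ℤ) + 1 := by simp
    rw [hl] at h1
    have hn' : (0:ℤ) ≤ ((n:ℤ)-1) * x.length :=
      mul_nonneg (by simp only [sub_nonneg]; exact_mod_cast hn) (by positivity)
    rcases le_or_gt k.toNat (n-1) with hc | hc
    · have h3 : ((min (n-1) k.toNat : ℕ) : ℤ) = k := by omega
      rw [h3]
      linarith
    · have h3 : ((min (n-1) k.toNat : ℕ) : ℤ) = (n:ℤ) - 1 := by omega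
      rw [h3]
      linarith

lemma sigmaBarF_ne_nil (r : ZMod n) (k : ℕ) (L : List (Vec n)) (hL : L ≠ []) :
    sigmaBarF n r k L = ∑ t ∈ Finset.range (k+1),
      tauF n r ((k:ℤ) - (t:ℤ)) L.dropLast *
      ∏ β ∈ Finset.range t, L.getLast hL (r - (k : ℕ) + 1 + (β : ℕ)) := by
  cases L with
  | nil => exact absurd rfl hL
  | cons y rest => rfl

lemma sigmaBarF_pos (hn : 1 ≤ n) (r : ZMod n) (d : ℕ) (L : List (Vec n)) (hLd : L.length = d + 1)
    (hx : ∀ v ∈ L, ∀ s, 0 < v s) : 0 < sigmaBarF n r ((n-1)*d) L := by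
  have hL : L ≠ [] := by intro h; simp [h] at hLd
  rw [sigmaBarF_ne_nil r _ L hL]
  refine Finset.sum_pos' (fun t _ => mul_nonneg
    (tauF_nonneg _ _ fun v hv => hx v (List.mem_of_mem_dropLast hv))
    (Finset.prod_nonneg fun β _ => le_of_lt (hx _ (List.getLast_mem hL) _)))
    ⟨0, Finset.mem_range.2 (by omega), ?_⟩
  simp only [Finset.range_zero, Finset.prod_empty, mul_one, Nat.cast_zero, sub_zero]
  refine tauF_pos hn _ (fun v hv => hx v (List.mem_of_mem_dropLast hv)) _ _ (by positivity) ?_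
  have hD : L.dropLast.length = d := by rw [List.length_dropLast, hLd]; omega
  rw [hD]
  have h2 : (((n-1)*d : ℕ) : ℤ) = ((n:ℤ)-1)*(d:ℤ) := by push_cast [Nat.cast_sub hn]; ring
  rw [h2]

lemma claimB (hn : 1 ≤ n) (ρ : ZMod n) (y : Vec n) (L : List (Vec n)) (hL : L ≠ [])
    (d : ℕ) (hd : L.length = d + 1) :
    sigmaBarF n ρ ((n-1)*(d+1)) (y :: L) =
      ∑ a ∈ Finset.range n, (∏ β ∈ Finset.range a, y (ρ - (β:ℕ))) *
        sigmaBarF n (ρ - (a:ℕ)) ((n-1)*d) L *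
        ∏ β ∈ Finset.range (n-1-a),
          L.getLast hL (ρ - (((n-1)*(d+1) : ℕ) : ZMod n) + 1 + (β:ℕ)) := by
  set k : ℕ := (n-1)*(d+1) with hk
  set K : ℕ := (n-1)*d with hK
  have hkK : k = K + (n-1) := by rw [hk, hK, Nat.mul_succ]
  have hD : L.dropLast.length = d := by rw [List.length_dropLast, hd]; omega
  have hKc : ((K:ℕ) : ℤ) = ((n:ℤ)-1)*(d:ℤ) := by rw [hK]; push_cast [Nat.cast_sub hn]; ring
  clear_value k K
  clear hk hK
  rw [sigmaBarF_ne_nil ρ k (y :: L) (List.cons_ne_nil y L)]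
  simp only [List.dropLast_cons_of_ne_nil hL, List.getLast_cons hL]
  simp only [tauF_cons, Finset.sum_mul]
  rw [Finset.sum_comm]
  refine Finset.sum_congr rfl fun a ha => ?_
  simp only [Finset.mem_range] at ha
  rw [sigmaBarF_ne_nil (ρ - ((a:ℕ) : ZMod n)) K L hL]
  simp only [mul_assoc]
  rw [← Finset.mul_sum, Finset.sum_mul]
  congr 1
  have hsplit : k + 1 = (n-1-a) + ((K+1) + a) := by omega
  rw [hsplit]
  rw [sum_shift _ (n-1-a) (K+1) a ?_ ?_]
  · refine Finset.sum_congr rfl fun t ht => ?_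
    simp only [Finset.mem_range] at ht
    have hτ : ((k:ℤ) - ((n-1-a) + t : ℕ) - (a:ℤ)) = (K:ℤ) - (t:ℤ) := by push_cast; omega
    rw [hτ, Finset.prod_range_add]
    have hcast : ((k:ℕ) : ZMod n) = ((K:ℕ) : ZMod n) + ((a:ℕ) : ZMod n) + ((n-1-a : ℕ) : ZMod n) := by
      rw [← Nat.cast_add, ← Nat.cast_add]
      exact congrArg _ (by omega)
    have hz : ∀ β ∈ Finset.range t,
        L.getLast hL (ρ - ((k:ℕ) : ZMod n) + 1 + (((n-1-a) + β : ℕ) : ZMod n)) =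
        L.getLast hL (ρ - ((a:ℕ) : ZMod n) - ((K:ℕ) : ZMod n) + 1 + ((β:ℕ) : ZMod n)) := by
      intro β _
      refine congrArg _ ?_
      rw [Nat.cast_add, hcast]
      ring
    rw [Finset.prod_congr rfl hz]
    ring
  · intro u hu
    have hbig : ((n:ℤ)-1) * (L.dropLast.length : ℤ) < (k:ℤ) - (u:ℤ) - (a:ℤ) := by
      rw [hD, ← hKc]
      omega
    rw [tauF_of_big _ hbig hn, zero_mul]
  · intro u hu
    have hneg : ((k:ℤ) - (((n-1-a) + u : ℕ):ℤ) - (a:ℤ)) < 0 := by push_cast; omega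
    rw [tauF_neg _ hneg, zero_mul]

end Lemmas3

section Lemmas4

variable {n : ℕ}

lemma seg_length (X : ℕ → Vec n) (i j : ℕ) : (seg X i j).length = j + 1 - i := by
  simp [seg]

lemma seg_ne_nil (X : ℕ → Vec n) {i j : ℕ} (h : i ≤ j) : seg X i j ≠ [] := by
  intro hc
  have := congrArg List.length hc
  rw [seg_length] at this
  simp at this
  omega

lemma seg_cons (X : ℕ → Vec n) {i j : ℕ} (h : i ≤ j) :
    seg X i j = X i :: seg X (i+1) j := by
  unfold seg
  have h1 : j + 1 - i = (j - i) + 1 := by omega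
  have h2 : j + 1 - (i+1) = j - i := by omega
  rw [h1, h2, List.range_succ_eq_map, List.map_cons, List.map_map]
  refine List.cons_eq_cons.2 ⟨by simp, ?_⟩
  refine List.map_congr_left fun t ht => ?_
  simp only [Function.comp_apply]
  exact congrArg X (by omega)

lemma seg_getLast (X : ℕ → Vec n) {i j : ℕ} (h : i ≤ j) (hne : seg X i j ≠ []) :
    (seg X i j).getLast hne = X j := by
  rw [List.getLast_eq_getElem]
  simp only [seg, List.getElem_map, List.getElem_range, List.length_map, List.length_range]
  exact congrArg X (by omega)

lemma seg_pos (X : ℕ → Vec n) (hX : ∀ p r, 0 < X p r) (i j : ℕ) :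
    ∀ v ∈ seg X i j, ∀ s, 0 < v s := by
  intro v hv s
  simp only [seg, List.mem_map, List.mem_range] at hv
  obtain ⟨t, _, rfl⟩ := hv
  exact hX _ _

lemma applyWord_cons (p : ℕ) (w : List ℕ) (X : ℕ → Vec n) :
    applyWord n (p :: w) X = etaAt n p (applyWord n w X) := rfl

lemma applyWord_untouched (w : List ℕ) (X : ℕ → Vec n) (q : ℕ)
    (h : ∀ p ∈ w, q < p) : applyWord n w X q = X q := by
  induction w with
  | nil => rfl
  | cons p w ih =>
    have hq : q < p := h p (List.mem_cons_self)
    rw [applyWord_cons]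
    show (if q = p then _ else if q = p + 1 then _ else applyWord n w X q) = X q
    rw [if_neg (by omega), if_neg (by omega)]
    exact ih fun p' hp' => h p' (List.mem_cons_of_mem _ hp')

lemma aux_main (hn : 2 ≤ n) (X : ℕ → Vec n) (hX : ∀ p r, 0 < X p r) :
    ∀ (d i : ℕ), 1 ≤ i → ∀ r : ZMod n,
      applyWord n (List.range' i d) X i r =
        X (i+d) (r + (d : ZMod n)) * sigmaBarF n r ((n-1)*d) (seg X i (i+d)) /
          sigmaBarF n (r-1) ((n-1)*d) (seg X i (i+d)) := by
  have hn1 : 1 ≤ n := by omega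
  intro d
  induction d with
  | zero =>
    intro i hi r
    have hseg : seg X i (i+0) = [X i] := by
      simp [seg, List.range_succ]
    have h1 : ∀ s : ZMod n, sigmaBarF n s ((n-1)*0) [X i] = 1 := by
      intro s
      simp [sigmaBarF, tauF_nil]
    rw [Nat.add_zero, hseg] at *
    rw [h1, h1]
    simp [applyWord]
  | succ d ih =>
    intro i hi r
    have hij : i + (d+1) = (i+1) + d := by omega
    set Y := applyWord n (List.range' (i+1) d) X with hYdef
    have hw : List.range' i (d+1) = i :: List.range' (i+1) d := by
      simpa using (List.range'_succ : List.range' i (d+1) 1 = _)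
    have hLHS : applyWord n (List.range' i (d+1)) X i r = etaB n (Y i) (Y (i+1)) r := by
      rw [hw, applyWord_cons]
      show (if i = i then etaB n (Y i) (Y (i+1)) else _) r = _
      rw [if_pos rfl]
    have hYi : Y i = X i := by
      refine applyWord_untouched _ _ _ fun p hp => ?_
      have := List.mem_range'_1.1 hp
      omega
    set L := seg X (i+1) ((i+1)+d) with hLdef
    set S : ZMod n → ℝ := fun s => sigmaBarF n s ((n-1)*d) L with hSdef
    have hlen : L.length = d + 1 := by rw [hLdef, seg_length]; omega
    have hLpos : ∀ v ∈ L, ∀ s, 0 < v s := seg_pos X hX _ _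
    have hSpos : ∀ s, 0 < S s := fun s => sigmaBarF_pos hn1 s d L hlen hLpos
    have hY1 : ∀ s : ZMod n, Y (i+1) s = X ((i+1)+d) (s + (d : ZMod n)) * S s / S (s-1) :=
      fun s => ih (i+1) (by omega) s
    -- telescoping products of Y (i+1)
    have htel : ∀ (ρ : ZMod n) (e : ℕ),
        (∏ t ∈ Finset.range e, Y (i+1) (ρ + 1 + (t : ZMod n))) =
          (∏ t ∈ Finset.range e, X ((i+1)+d) (ρ + 1 + (t : ZMod n) + (d : ZMod n))) *
            S (ρ + (e : ZMod n)) / S ρ := by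
      intro ρ e
      induction e with
      | zero => simp [(hSpos ρ).ne']
      | succ e ihe =>
        rw [Finset.prod_range_succ, ihe, Finset.prod_range_succ, hY1]
        have h1 : (ρ + 1 + (e : ZMod n)) - 1 = ρ + (e : ZMod n) := by ring
        have h2 : ρ + ((e+1 : ℕ) : ZMod n) = ρ + 1 + (e : ZMod n) := by push_cast; ring
        rw [h1, h2]
        have hz1 := (hSpos ρ).ne'
        have hz2 := (hSpos (ρ + (e : ZMod n))).ne'
        field_simp
    -- the segment from i to i+(d+1)
    have hsegc : seg X i (i+(d+1)) = X i :: L := by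
      rw [seg_cons X (by omega : i ≤ i + (d+1)), hLdef, hij]
    have hLne : L ≠ [] := seg_ne_nil X (by omega)
    have hzlast : L.getLast hLne = X ((i+1)+d) := seg_getLast X (by omega) hLne
    -- kappa in terms of sigmaBar
    have hT : ∀ ρ : ZMod n, kappaF n ρ (X i) (Y (i+1)) =
        sigmaBarF n (ρ - 1) ((n-1)*(d+1)) (seg X i (i+(d+1))) / S ρ := by
      intro ρ
      rw [kappaF]
      have hstep : ∀ e ∈ Finset.range n,
          (∏ t ∈ Finset.range e, Y (i+1) (ρ + 1 + (t : ZMod n))) *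
            (∏ t ∈ Finset.range (n-1-e), X i (ρ + 1 + (e : ZMod n) + (t : ZMod n))) =
          ((∏ t ∈ Finset.range e, X ((i+1)+d) (ρ + 1 + (t : ZMod n) + (d : ZMod n))) *
            S (ρ + (e : ZMod n)) *
            (∏ t ∈ Finset.range (n-1-e), X i (ρ + 1 + (e : ZMod n) + (t : ZMod n)))) / S ρ := by
        intro e _
        rw [htel ρ e]
        ring
      rw [Finset.sum_congr rfl hstep, ← Finset.sum_div]
      congr 1
      rw [hsegc, claimB hn1 (ρ-1) (X i) L hLne d hlen]
      refine Finset.sum_nbij' (i := fun e => n-1-e) (j := fun a => n-1-a)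
        (fun e he => Finset.mem_range.2
          (by have := Finset.mem_range.1 he; show n-1-e < n; omega))
        (fun a ha => Finset.mem_range.2
          (by have := Finset.mem_range.1 ha; show n-1-a < n; omega))
        (fun e he => by have := Finset.mem_range.1 he; show n-1-(n-1-e) = e; omega)
        (fun a ha => by have := Finset.mem_range.1 ha; show n-1-(n-1-a) = a; omega)
        (fun e he => ?_)
      have he : e < n := Finset.mem_range.1 he
      beta_reduce
      -- three component identities
      have e3 : (∏ t ∈ Finset.range (n-1-e), X i (ρ + 1 + (e : ZMod n) + (t : ZMod n))) =
          ∏ β ∈ Finset.range (n-1-e), X i ((ρ - 1) - (β : ZMod n)) := by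
        rw [← Finset.prod_range_reflect (fun β => X i ((ρ - 1) - (β : ZMod n))) (n-1-e)]
        refine Finset.prod_congr rfl fun t ht => ?_
        have ht : t < n-1-e := Finset.mem_range.1 ht
        refine congrArg _ ?_
        have hNat : ((n-1-e-1-t) + t + e + 2 : ℕ) = n := by omega
        have h0 : (((n-1-e-1-t) + t + e + 2 : ℕ) : ZMod n) = 0 := by
          rw [hNat]; exact ZMod.natCast_self n
        push_cast at h0
        linear_combination h0
      have e2 : S (ρ + (e : ZMod n)) = sigmaBarF n ((ρ - 1) - ((n-1-e : ℕ) : ZMod n)) ((n-1)*d) L := by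
        rw [hSdef]
        refine congrArg (fun s => sigmaBarF n s ((n-1)*d) L) ?_
        have hNat : ((n-1-e) + e + 1 : ℕ) = n := by omega
        have h0 : (((n-1-e) + e + 1 : ℕ) : ZMod n) = 0 := by
          rw [hNat]; exact ZMod.natCast_self n
        push_cast at h0
        linear_combination h0
      have e1 : (∏ t ∈ Finset.range e, X ((i+1)+d) (ρ + 1 + (t : ZMod n) + (d : ZMod n))) =
          ∏ β ∈ Finset.range (n-1-(n-1-e)),
            L.getLast hLne ((ρ - 1) - (((n-1)*(d+1) : ℕ) : ZMod n) + 1 + (β : ZMod n)) := by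
      -- n-1-(n-1-e) = e
        have hee : n-1-(n-1-e) = e := by omega
        rw [hee, hzlast]
        refine Finset.prod_congr rfl fun t _ => ?_
        refine congrArg _ ?_
        have hNat : ((n-1)*(d+1) + d + 1 : ℕ) = n * (d+1) := by
          have h5 : n = (n-1)+1 := by omega
          conv_rhs => rw [h5]
          rw [Nat.add_mul]
          omega
        have h0 : (((n-1)*(d+1) + d + 1 : ℕ) : ZMod n) = 0 := by
          rw [hNat]
          push_cast [ZMod.natCast_self]
          ring
        push_cast at h0 ⊢
        linear_combination h0
      rw [e1, e2, e3]
      ring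
    -- final assembly
    have hUpos : ∀ s : ZMod n, 0 < sigmaBarF n s ((n-1)*(d+1)) (seg X i (i+(d+1))) := by
      intro s
      refine sigmaBarF_pos hn1 s (d+1) _ ?_ (seg_pos X hX _ _)
      rw [seg_length]; omega
    rw [hLHS, hYi]
    show Y (i+1) (r+1) * kappaF n (r+1) (X i) (Y (i+1)) / kappaF n r (X i) (Y (i+1)) = _
    rw [hY1 (r+1), hT (r+1), hT r]
    have hr1 : (r + 1 : ZMod n) - 1 = r := by ring
    rw [hr1]
    have hXarg : (r + 1) + (d : ZMod n) = r + ((d+1 : ℕ) : ZMod n) := by push_cast; ring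
    rw [hXarg, ← hij]
    have hz1 := (hSpos r).ne'
    have hz2 := (hSpos (r+1)).ne'
    have hz3 := (hUpos r).ne'
    have hz4 := (hUpos (r-1)).ne'
    field_simp

end Lemmas4

/-- for `1 ≤ i < j ≤ m`,
`s_i ⋯ s_{j-1}(x_i^{(r)}) = x_j^{(r+j-i)} σ̄_{(n-1)(j-i)}^{(r)}(x_i,…,x_j) /
σ̄_{(n-1)(j-i)}^{(r-1)}(x_i,…,x_j)`. -/
theorem one_shift_dual (n : ℕ) (hn : 2 ≤ n) (m : ℕ) (X : ℕ → Vec n)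
    (hX : ∀ p r, 0 < X p r) (i j : ℕ) (hi : 1 ≤ i) (hij : i < j) (hjm : j ≤ m)
    (r : ZMod n) :
    applyWord n (List.range' i (j - i)) X i r =
      X j (r + (j : ℕ) - (i : ℕ)) *
        sigmaBarF n r ((n - 1) * (j - i)) (seg X i j) /
        sigmaBarF n (r - 1) ((n - 1) * (j - i)) (seg X i j) := by
  have h := aux_main hn X hX (j - i) i hi r
  rw [show i + (j - i) = j from by omega] at h
  have h1 : ((j - i : ℕ) : ZMod n) = (j : ZMod n) - (i : ZMod n) := Nat.cast_sub hij.le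
  rw [h1, ← add_sub_assoc] at h
  exact h
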